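/- Adding a single shortcut to the circle never decreases the diameter: for every shortcut s, diam({s}) = π. Consequently diam(1) = diam(0) = π. -/

import Mathlib

open Real MeasureTheory

/-- Arc distance between points on the unit circle, given by their polar angles:
the length of the shorter arc between them. -/
noncomputable def arcDist (p q : ℝ) : ℝ := ⨅ n : ℤ, |p - q + 2 * π * n|

/-- Euclidean length of the chord between the circle points with angles `u` and `v`. -/
noncomputable def chordLen (u v : ℝ) : ℝ := 2 * Real.sin (arcDist u v / 2)

/-- A pair of angles is a genuine shortcut (chord) if its endpoints are distinct points. -/
def IsShortcut (s : ℝ × ℝ) : Prop := arcDist s.1 s.2 ≠ 0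

/-- δ(a) = arcsin(a/2) - a/2. -/
noncomputable def sdelta (a : ℝ) : ℝ := Real.arcsin (a / 2) - a / 2

/-- Cost of a path that starts at `p`, fully traverses the listed chords in order
(travelling along the circle in between), and ends at `q`. -/
noncomputable def walkCost (q : ℝ) : ℝ → List (ℝ × ℝ) → ℝ
  | p, [] => arcDist p q
  | p, e :: L => arcDist p e.1 + chordLen e.1 e.2 + walkCost q e.2 L

/-- Shortest-path distance from `p` to `q` using the shortcuts of `S`
(each usable in either orientation, and always traversed completely). -/
noncomputable def dS (S : Finset (ℝ × ℝ)) (p q : ℝ) : ℝ :=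
  sInf {c | ∃ L : List (ℝ × ℝ), (∀ e ∈ L, e ∈ S ∨ (e.2, e.1) ∈ S) ∧ c = walkCost q p L}

/-- Diameter of the circle augmented with the shortcuts of `S`. -/
noncomputable def diamS (S : Finset (ℝ × ℝ)) : ℝ :=
  sSup {d | ∃ p q : ℝ, d = dS S p q}

/-- diam(k): the optimal diameter achievable with `k` shortcuts. -/
noncomputable def diamK (k : ℕ) : ℝ :=
  sInf {d | ∃ S : Finset (ℝ × ℝ), S.card = k ∧ (∀ s ∈ S, IsShortcut s) ∧ d = diamS S}

/-- Distance from `p` to `q` when a single shortcut with endpoints `u`, `v` is available. -/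
noncomputable def dOne (u v p q : ℝ) : ℝ :=
  min (arcDist p q)
    (min (arcDist p u + chordLen u v + arcDist v q)
      (arcDist p v + chordLen u v + arcDist u q))

/-- Two angles represent the same point of the circle. -/
def SamePoint (p q : ℝ) : Prop := arcDist p q = 0

/-- Two pairs of angles represent the same chord of the circle. -/
def SameChord (s t : ℝ × ℝ) : Prop :=
  (SamePoint s.1 t.1 ∧ SamePoint s.2 t.2) ∨ (SamePoint s.1 t.2 ∧ SamePoint s.2 t.1)

/-- `p` lies in the deep umbra of the shortcut from `u` to `u + β`
(where `0 < β ≤ π` is the counterclockwise arc spanned by the shortcut):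
`p` lies in the inner umbra, and `|p u'| + |s| ≥ d(p, v')` where `u'` is the
endpoint closer to `p` and `v'` the other one. -/
def InDeepUmbra (u β p : ℝ) : Prop :=
  (∃ t : ℝ, sdelta (chordLen u (u + β)) ≤ t ∧ t ≤ β - sdelta (chordLen u (u + β)) ∧
    arcDist p (u + t) = 0) ∧
  (arcDist p u ≤ arcDist p (u + β) →
    arcDist p (u + β) ≤ chordLen p u + chordLen u (u + β)) ∧
  (arcDist p (u + β) ≤ arcDist p u →
    arcDist p u ≤ chordLen p (u + β) + chordLen u (u + β))

/-- `d` equals δ*_k : for `k ∈ {3,4,5}` this is `δ(a*_k)` where `a*_k + δ(a*_k) = (k-1)π/k`,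
and for `k = 6` it is `δ(2) = π/2 - 1`. -/
def dstarSpec (k : ℕ) (d : ℝ) : Prop :=
  (k = 6 ∧ d = sdelta 2) ∨
    (∃ a, a ∈ Set.Icc (0 : ℝ) 2 ∧ a + sdelta a = ((k : ℝ) - 1) * π / k ∧ d = sdelta a)

lemma arcDist_bddBelow (p q : ℝ) : BddBelow (Set.range fun n : ℤ => |p - q + 2*π*n|) :=
  ⟨0, by rintro x ⟨n, rfl⟩; exact abs_nonneg _⟩

lemma arcDist_le (p q : ℝ) (n : ℤ) : arcDist p q ≤ |p - q + 2*π*n| :=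
  ciInf_le (arcDist_bddBelow p q) n

lemma arcDist_nonneg (p q : ℝ) : 0 ≤ arcDist p q :=
  le_ciInf fun _ => abs_nonneg _

lemma arcDist_eq_abs {p q : ℝ} (h : |p - q| ≤ π) : arcDist p q = |p - q| := by
  refine le_antisymm (by simpa using arcDist_le p q 0) (le_ciInf fun n => ?_)
  rcases eq_or_ne n 0 with rfl | hn
  · simp
  · have h1 : (1:ℝ) ≤ |(n:ℝ)| := by exact_mod_cast Int.one_le_abs hn
    have h2 : |2*π*(n:ℝ)| = 2*π*|(n:ℝ)| := by
      rw [abs_mul, abs_of_pos (by positivity : (0:ℝ) < 2*π)]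
    have h3 : |2*π*(n:ℝ)| ≤ |p - q + 2*π*n| + |p - q| := by
      have h4 := abs_add_le (p - q + 2*π*(n:ℝ)) (-(p - q))
      have h5 : p - q + 2*π*(n:ℝ) + -(p - q) = 2*π*(n:ℝ) := by ring
      rw [h5, abs_neg] at h4
      exact h4
    have hpi : 0 < π := pi_pos
    nlinarith

lemma arcDist_symm (p q : ℝ) : arcDist p q = arcDist q p := by
  have key : ∀ a b : ℝ, arcDist a b ≤ arcDist b a := by
    intro a b
    refine le_ciInf fun n => ?_
    have h := arcDist_le a b (-n)
    have : |a - b + 2*π*(-n : ℤ)| = |b - a + 2*π*n| := by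
      push_cast
      rw [show a - b + 2*π*(-(n:ℝ)) = -(b - a + 2*π*n) by ring, abs_neg]
    rwa [this] at h
  exact le_antisymm (key p q) (key q p)

lemma arcDist_shift (p q : ℝ) (m : ℤ) : arcDist (p + 2*π*m) q = arcDist p q := by
  refine le_antisymm (le_ciInf fun n => ?_) (le_ciInf fun n => ?_)
  · have h := arcDist_le (p + 2*π*m) q (n - m)
    have e : p + 2*π*(m:ℝ) - q + 2*π*((n - m : ℤ) : ℝ) = p - q + 2*π*n := by
      push_cast; ring
    rwa [e] at h
  · have h := arcDist_le p q (n + m)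
    have e : p - q + 2*π*((n + m : ℤ) : ℝ) = p + 2*π*m - q + 2*π*n := by
      push_cast; ring
    rwa [e] at h

lemma arcDist_exists_rep (p q : ℝ) :
    ∃ n : ℤ, |p - q + 2*π*n| ≤ π ∧ arcDist p q = |p - q + 2*π*n| := by
  refine ⟨-round ((p - q) / (2*π)), ?_, ?_⟩
  · have h2 : (0:ℝ) < 2*π := by positivity
    have h1 : |(p - q)/(2*π) - round ((p - q)/(2*π))| ≤ 1/2 := abs_sub_round _
    have e : p - q + 2*π*((-round ((p - q)/(2*π)) : ℤ) : ℝ) =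
        2*π * ((p - q)/(2*π) - round ((p - q)/(2*π))) := by
      push_cast; field_simp; ring
    rw [e, abs_mul, abs_of_pos h2]
    nlinarith [pi_pos]
  · set n : ℤ := -round ((p - q) / (2*π)) with hn
    have h4 : arcDist p q = arcDist (p + 2*π*n) q := (arcDist_shift p q n).symm
    have h5 : |p + 2*π*n - q| ≤ π := by
      have h2 : (0:ℝ) < 2*π := by positivity
      have h1 : |(p - q)/(2*π) - round ((p - q)/(2*π))| ≤ 1/2 := abs_sub_round _
      have e : p + 2*π*(n:ℝ) - q =
          2*π * ((p - q)/(2*π) - round ((p - q)/(2*π))) := by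
        rw [hn]; push_cast; field_simp; ring
      rw [e, abs_mul, abs_of_pos h2]
      nlinarith [pi_pos]
    rw [h4, arcDist_eq_abs h5]
    congr 1
    ring

lemma arcDist_le_pi (p q : ℝ) : arcDist p q ≤ π := by
  obtain ⟨n, hn, h⟩ := arcDist_exists_rep p q
  rw [h]; exact hn

lemma arcDist_triangle (p q r : ℝ) : arcDist p r ≤ arcDist p q + arcDist q r := by
  refine le_ciInf_add_ciInf fun m n => ?_
  have h := arcDist_le p r (m + n)
  have e : p - r + 2*π*((m + n : ℤ) : ℝ) = (p - q + 2*π*m) + (q - r + 2*π*n) := by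
    push_cast; ring
  rw [e] at h
  exact h.trans (abs_add_le _ _)

lemma chordLen_nonneg (u v : ℝ) : 0 ≤ chordLen u v := by
  have h1 := arcDist_nonneg u v
  have h2 := arcDist_le_pi u v
  have := Real.sin_nonneg_of_nonneg_of_le_pi (by linarith : 0 ≤ arcDist u v / 2)
    (by linarith [pi_pos] : arcDist u v / 2 ≤ π)
  unfold chordLen; linarith

lemma chordLen_symm (u v : ℝ) : chordLen u v = chordLen v u := by
  unfold chordLen; rw [arcDist_symm]

lemma walkCost_nonneg (q : ℝ) : ∀ (p : ℝ) (L : List (ℝ × ℝ)), 0 ≤ walkCost q p L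
  | p, [] => arcDist_nonneg p q
  | p, e :: L => by
      have h1 := arcDist_nonneg p e.1
      have h2 := chordLen_nonneg e.1 e.2
      have h3 := walkCost_nonneg q e.2 L
      unfold walkCost; linarith

lemma dOne_le_arc (u v p q : ℝ) : dOne u v p q ≤ arcDist p q := min_le_left _ _

lemma dOne_le_mid1 (u v p q : ℝ) :
    dOne u v p q ≤ arcDist p u + chordLen u v + arcDist v q :=
  (min_le_right _ _).trans (min_le_left _ _)

lemma dOne_le_mid2 (u v p q : ℝ) :
    dOne u v p q ≤ arcDist p v + chordLen u v + arcDist u q :=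
  (min_le_right _ _).trans (min_le_right _ _)

lemma dOne_step1 (u v p q : ℝ) :
    dOne u v p q ≤ arcDist p u + chordLen u v + dOne u v v q := by
  have hvu := arcDist_nonneg v u
  have hvv := arcDist_nonneg v v
  have ha := chordLen_nonneg u v
  have htri := arcDist_triangle p u q
  have hA := dOne_le_mid1 u v p q
  have hP := dOne_le_arc u v p q
  have hB : dOne u v p q ≤ arcDist p u + chordLen u v +
      (arcDist v u + chordLen u v + arcDist v q) := by linarith
  have hC : dOne u v p q ≤ arcDist p u + chordLen u v +
      (arcDist v v + chordLen u v + arcDist u q) := by linarith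
  show dOne u v p q ≤ arcDist p u + chordLen u v +
    min (arcDist v q) (min (arcDist v u + chordLen u v + arcDist v q)
      (arcDist v v + chordLen u v + arcDist u q))
  rcases le_total (arcDist v q) (min (arcDist v u + chordLen u v + arcDist v q)
      (arcDist v v + chordLen u v + arcDist u q)) with h | h
  · rw [min_eq_left h]; exact hA
  · rw [min_eq_right h]
    rcases le_total (arcDist v u + chordLen u v + arcDist v q)
        (arcDist v v + chordLen u v + arcDist u q) with h' | h'
    · rw [min_eq_left h']; exact hB
    · rw [min_eq_right h']; exact hC

lemma dOne_step2 (u v p q : ℝ) :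
    dOne u v p q ≤ arcDist p v + chordLen v u + dOne u v u q := by
  have huv := arcDist_nonneg u v
  have huu := arcDist_nonneg u u
  have ha := chordLen_nonneg u v
  have htri := arcDist_triangle p v q
  have hR := dOne_le_mid2 u v p q
  have hP := dOne_le_arc u v p q
  have htri2 := arcDist_triangle p v q
  rw [chordLen_symm v u]
  have hA : dOne u v p q ≤ arcDist p v + chordLen u v + arcDist u q := hR
  have hB : dOne u v p q ≤ arcDist p v + chordLen u v +
      (arcDist u u + chordLen u v + arcDist v q) := by linarith
  have hC : dOne u v p q ≤ arcDist p v + chordLen u v +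
      (arcDist u v + chordLen u v + arcDist u q) := by linarith
  show dOne u v p q ≤ arcDist p v + chordLen u v +
    min (arcDist u q) (min (arcDist u u + chordLen u v + arcDist v q)
      (arcDist u v + chordLen u v + arcDist u q))
  rcases le_total (arcDist u q) (min (arcDist u u + chordLen u v + arcDist v q)
      (arcDist u v + chordLen u v + arcDist u q)) with h | h
  · rw [min_eq_left h]; exact hA
  · rw [min_eq_right h]
    rcases le_total (arcDist u u + chordLen u v + arcDist v q)
        (arcDist u v + chordLen u v + arcDist u q) with h' | h'
    · rw [min_eq_left h']; exact hB
    · rw [min_eq_right h']; exact hC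

lemma dOne_le_walkCost (u v q : ℝ) (L : List (ℝ × ℝ))
    (hL : ∀ e ∈ L, e = (u, v) ∨ e = (v, u)) (p : ℝ) :
    dOne u v p q ≤ walkCost q p L := by
  induction L generalizing p with
  | nil => exact dOne_le_arc u v p q
  | cons e L ih =>
    have hLe : ∀ e' ∈ L, e' = (u, v) ∨ e' = (v, u) := fun e' h => hL e' (List.mem_cons_of_mem _ h)
    have he := hL e (List.mem_cons_self)
    show dOne u v p q ≤ arcDist p e.1 + chordLen e.1 e.2 + walkCost q e.2 L
    rcases he with rfl | rfl
    · calc dOne u v p q ≤ arcDist p u + chordLen u v + dOne u v v q := dOne_step1 u v p q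
        _ ≤ arcDist p u + chordLen u v + walkCost q v L := by
            have := ih hLe v; linarith
    · calc dOne u v p q ≤ arcDist p v + chordLen v u + dOne u v u q := dOne_step2 u v p q
        _ ≤ arcDist p v + chordLen v u + walkCost q u L := by
            have := ih hLe u; linarith

lemma dS_set_nonempty (S : Finset (ℝ × ℝ)) (p q : ℝ) :
    {c | ∃ L : List (ℝ × ℝ), (∀ e ∈ L, e ∈ S ∨ (e.2, e.1) ∈ S) ∧ c = walkCost q p L}.Nonempty :=
  ⟨arcDist p q, [], by simp, rfl⟩

lemma dS_set_bddBelow (S : Finset (ℝ × ℝ)) (p q : ℝ) :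
    BddBelow {c | ∃ L : List (ℝ × ℝ), (∀ e ∈ L, e ∈ S ∨ (e.2, e.1) ∈ S) ∧ c = walkCost q p L} :=
  ⟨0, by rintro c ⟨L, _, rfl⟩; exact walkCost_nonneg q p L⟩

lemma dS_le_arcDist (S : Finset (ℝ × ℝ)) (p q : ℝ) : dS S p q ≤ arcDist p q :=
  csInf_le (dS_set_bddBelow S p q) ⟨[], by simp, rfl⟩

lemma dS_single_eq_pi (u v : ℝ) :
    ∃ p q : ℝ, dS {(u, v)} p q = π := by
  obtain ⟨n, hn, hrep⟩ := arcDist_exists_rep u v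
  set w : ℝ := u + 2*π*n with hw
  have hwv : |w - v| ≤ π := by
    rw [hw, show u + 2*π*(n:ℝ) - v = u - v + 2*π*n by ring]; exact hn
  have hβ : arcDist u v = |w - v| := by
    rw [hrep]; congr 1; rw [hw]; ring
  set p : ℝ := (w + v)/2 with hp
  set q : ℝ := p + π with hq
  have habs2 : |w - v|/2 = |p - w| := by
    rw [show p - w = -((w - v)/2) by rw [hp]; ring, abs_neg, abs_div,
      abs_of_pos (by norm_num : (0:ℝ) < 2)]
  have habs3 : |w - v|/2 = |p - v| := by
    rw [show p - v = (w - v)/2 by rw [hp]; ring, abs_div,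
      abs_of_pos (by norm_num : (0:ℝ) < 2)]
  have hpw : arcDist p w = |w - v|/2 := by
    have h1 : |p - w| ≤ π := by
      rw [← habs2]; linarith [pi_pos, abs_nonneg (w - v)]
    rw [arcDist_eq_abs h1, ← habs2]
  have hpu : arcDist p u = |w - v|/2 := by
    rw [← hpw, arcDist_symm p w, hw, arcDist_shift, arcDist_symm]
  have hpv : arcDist p v = |w - v|/2 := by
    have h1 : |p - v| ≤ π := by
      rw [← habs3]; linarith [pi_pos, abs_nonneg (w - v)]
    rw [arcDist_eq_abs h1, ← habs3]
  have hpq : arcDist p q = π := by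
    rw [arcDist_eq_abs (by rw [hq, show p - (p + π) = -π by ring, abs_neg, abs_of_pos pi_pos]),
      hq, show p - (p + π) = -π by ring, abs_neg, abs_of_pos pi_pos]
  have ha := chordLen_nonneg u v
  have hvq : π - |w - v|/2 ≤ arcDist v q := by
    have := arcDist_triangle p v q; linarith [hpv, hpq]
  have huq : π - |w - v|/2 ≤ arcDist u q := by
    have := arcDist_triangle p u q; linarith [hpu, hpq]
  have hdOne : dOne u v p q = π := by
    have h2 : π ≤ arcDist p u + chordLen u v + arcDist v q := by
      rw [hpu]; linarith
    have h3 : π ≤ arcDist p v + chordLen u v + arcDist u q := by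
      rw [hpv]; linarith
    unfold dOne
    rw [hpq]
    rw [min_eq_left (le_min h2 h3)]
  refine ⟨p, q, le_antisymm ((dS_le_arcDist _ p q).trans_eq hpq) ?_⟩
  rw [← hdOne]
  refine le_csInf (dS_set_nonempty _ p q) ?_
  rintro c ⟨L, hL, rfl⟩
  refine dOne_le_walkCost u v q L (fun e he => ?_) p
  rcases hL e he with h | h
  · left; exact Finset.mem_singleton.mp h
  · right
    have h2 := Finset.mem_singleton.mp h
    have hu : e.2 = u := congrArg Prod.fst h2
    have hv : e.1 = v := congrArg Prod.snd h2
    have : e = (e.1, e.2) := rfl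
    rw [this, hu, hv]

lemma diamS_single (s : ℝ × ℝ) : diamS {s} = π := by
  obtain ⟨u, v⟩ := s
  obtain ⟨p, q, hpq⟩ := dS_single_eq_pi u v
  have hub : ∀ d ∈ {d | ∃ p q : ℝ, d = dS ({(u, v)} : Finset (ℝ × ℝ)) p q}, d ≤ π := by
    rintro d ⟨p', q', rfl⟩
    exact (dS_le_arcDist _ p' q').trans (arcDist_le_pi p' q')
  have hmem : π ∈ {d | ∃ p q : ℝ, d = dS ({(u, v)} : Finset (ℝ × ℝ)) p q} := ⟨p, q, hpq.symm⟩
  exact le_antisymm (csSup_le ⟨π, hmem⟩ hub) (le_csSup ⟨π, hub⟩ hmem)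

lemma dS_empty (p q : ℝ) : dS ∅ p q = arcDist p q := by
  refine le_antisymm (dS_le_arcDist ∅ p q) (le_csInf (dS_set_nonempty ∅ p q) ?_)
  rintro c ⟨L, hL, rfl⟩
  match L with
  | [] => exact le_refl _
  | e :: L' =>
    exact absurd (hL e (List.mem_cons_self)) (by simp)

lemma diamS_empty : diamS ∅ = π := by
  have hub : ∀ d ∈ {d | ∃ p q : ℝ, d = dS (∅ : Finset (ℝ × ℝ)) p q}, d ≤ π := by
    rintro d ⟨p', q', rfl⟩
    exact (dS_le_arcDist _ p' q').trans (arcDist_le_pi p' q')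
  have hpi : arcDist 0 π = π := by
    rw [arcDist_eq_abs (by rw [show (0:ℝ) - π = -π by ring, abs_neg, abs_of_pos pi_pos]),
      show (0:ℝ) - π = -π by ring, abs_neg, abs_of_pos pi_pos]
  have hmem : π ∈ {d | ∃ p q : ℝ, d = dS (∅ : Finset (ℝ × ℝ)) p q} :=
    ⟨0, π, by rw [dS_empty, hpi]⟩
  exact le_antisymm (csSup_le ⟨π, hmem⟩ hub) (le_csSup ⟨π, hub⟩ hmem)

/-- a single shortcut never decreases the diameter, so
`diam({s}) = π` for every shortcut `s`, and `diam(1) = diam(0) = π`. -/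
theorem stmt0 :
    (∀ s : ℝ × ℝ, IsShortcut s → diamS {s} = π) ∧
    diamK 1 = π ∧ diamK 0 = π := by
  refine ⟨fun s _ => diamS_single s, ?_, ?_⟩
  · have hset : {d | ∃ S : Finset (ℝ × ℝ), S.card = 1 ∧ (∀ s ∈ S, IsShortcut s) ∧ d = diamS S}
        = {π} := by
      ext d
      simp only [Set.mem_setOf_eq, Set.mem_singleton_iff]
      constructor
      · rintro ⟨S, hcard, _, rfl⟩
        obtain ⟨s, rfl⟩ := Finset.card_eq_one.mp hcard
        exact diamS_single s
      · rintro rfl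
        refine ⟨{(0, π)}, Finset.card_singleton _, ?_, (diamS_single _).symm⟩
        intro s hs
        rw [Finset.mem_singleton] at hs
        subst hs
        show arcDist 0 π ≠ 0
        rw [arcDist_eq_abs (by rw [show (0:ℝ) - π = -π by ring, abs_neg, abs_of_pos pi_pos]),
          show (0:ℝ) - π = -π by ring, abs_neg, abs_of_pos pi_pos]
        exact pi_ne_zero
    rw [diamK, hset, csInf_singleton]
  · have hset : {d | ∃ S : Finset (ℝ × ℝ), S.card = 0 ∧ (∀ s ∈ S, IsShortcut s) ∧ d = diamS S}
        = {π} := by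
      ext d
      simp only [Set.mem_setOf_eq, Set.mem_singleton_iff]
      constructor
      · rintro ⟨S, hcard, _, rfl⟩
        rw [Finset.card_eq_zero.mp hcard]
        exact diamS_empty
      · rintro rfl
        exact ⟨∅, rfl, by simp, diamS_empty.symm⟩
    rw [diamK, hset, csInf_singleton]
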